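/- Let A be an n×n real matrix with spectral radius less than 1, and B an n×m real matrix. Then the Lyapunov–Stein equation W − A W Aᵀ = B Bᵀ has a unique solution W, it is positive semidefinite, equals ∑_{k=0}^∞ A^k B Bᵀ (Aᵀ)^k, and W is positive definite if and only if (A,B) is controllable. -/

import Mathlib

open Matrix Filter
open scoped NNReal ENNReal

section Aux

attribute [local instance] Matrix.linftyOpNormedRing Matrix.linftyOpNormedAlgebra
  Matrix.linftyOpNormedAddCommGroup

private theorem stmt16.decayC (n : ℕ) (A : Matrix (Fin n) (Fin n) ℂ)
    (hstable : ∀ μ : ℂ, μ ∈ spectrum ℂ A → ‖μ‖ < 1) :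
    ∃ C r : ℝ, 0 ≤ C ∧ 0 ≤ r ∧ r < 1 ∧ ∀ k, ‖A ^ k‖ ≤ C * r ^ k := by
  rcases Nat.eq_zero_or_pos n with hn | hn
  · subst hn
    refine ⟨1, 0, zero_le_one, le_refl 0, zero_lt_one, fun k => ?_⟩
    have h0 : (A ^ k : Matrix (Fin 0) (Fin 0) ℂ) = 0 := by ext i j; exact i.elim0
    rw [h0, norm_zero]
    positivity
  have : CompleteSpace (Matrix (Fin n) (Fin n) ℂ) := FiniteDimensional.complete ℂ _
  have hnt : Nontrivial (Matrix (Fin n) (Fin n) ℂ) := by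
    have : Nonempty (Fin n) := ⟨⟨0, hn⟩⟩
    infer_instance
  have hρ : spectralRadius ℂ A < 1 := by
    have h1 := spectrum.spectralRadius_lt_of_forall_lt A (r := 1) (fun z hz => ?_)
    · simpa using h1
    · have := hstable z hz
      rw [← NNReal.coe_lt_coe]
      simpa using this
  obtain ⟨r', hρr, hr1⟩ := ENNReal.lt_iff_exists_nnreal_btwn.mp hρ
  have hr1' : (r' : ℝ) < 1 := by exact_mod_cast hr1
  have hr0 : 0 < r' := by
    have h : (0 : ℝ≥0∞) < (r' : ℝ≥0∞) := lt_of_le_of_lt zero_le hρr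
    exact_mod_cast h
  have hr0' : (0:ℝ) < r' := hr0
  have hG := spectrum.pow_nnnorm_pow_one_div_tendsto_nhds_spectralRadius A
  have hev : ∀ᶠ k : ℕ in atTop, (‖A ^ k‖₊ : ℝ≥0∞) ^ (1 / (k:ℝ)) < (r' : ℝ≥0∞) :=
    hG.eventually_lt_const hρr
  obtain ⟨N, hN⟩ := (hev.and (eventually_ge_atTop 1)).exists_forall_of_atTop
  have key : ∀ k, N ≤ k → ‖A ^ k‖ ≤ (r' : ℝ) ^ k := by
    intro k hk
    obtain ⟨h1, h2⟩ := hN k hk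
    have hkpos : (0:ℝ) < k := by exact_mod_cast h2
    have h3 : ((‖A ^ k‖₊ : ℝ≥0∞) ^ (1 / (k:ℝ))) ^ (k:ℝ) < (r' : ℝ≥0∞) ^ (k:ℝ) :=
      ENNReal.rpow_lt_rpow h1 hkpos
    rw [← ENNReal.rpow_mul, one_div, inv_mul_cancel₀ (ne_of_gt hkpos), ENNReal.rpow_one,
      ENNReal.rpow_natCast, ← ENNReal.coe_pow, ENNReal.coe_lt_coe] at h3
    have := h3.le
    rw [← NNReal.coe_le_coe] at this
    simpa using this
  set C : ℝ := 1 + ∑ j ∈ Finset.range N, ‖A ^ j‖ / (r':ℝ) ^ j with hC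
  have hCpos : 1 ≤ C := by
    have : 0 ≤ ∑ j ∈ Finset.range N, ‖A ^ j‖ / (r':ℝ) ^ j :=
      Finset.sum_nonneg fun j _ => div_nonneg (norm_nonneg _) (by positivity)
    rw [hC]
    linarith
  refine ⟨C, r', by linarith, hr0'.le, hr1', fun k => ?_⟩
  rcases lt_or_ge k N with hk | hk
  · have hmem : ‖A ^ k‖ / (r':ℝ) ^ k ≤ C := by
      rw [hC]
      have hle : ‖A ^ k‖ / (r':ℝ) ^ k ≤ ∑ j ∈ Finset.range N, ‖A ^ j‖ / (r':ℝ) ^ j :=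
        Finset.single_le_sum (f := fun j => ‖A ^ j‖ / (r':ℝ) ^ j)
          (fun j _ => div_nonneg (norm_nonneg _) (by positivity)) (Finset.mem_range.mpr hk)
      linarith
    calc ‖A ^ k‖ = (‖A ^ k‖ / (r':ℝ) ^ k) * (r':ℝ) ^ k := by field_simp
    _ ≤ C * (r':ℝ) ^ k := by
        apply mul_le_mul_of_nonneg_right hmem (by positivity)
  · calc ‖A ^ k‖ ≤ (r':ℝ) ^ k := key k hk
    _ ≤ C * (r':ℝ) ^ k := le_mul_of_one_le_left (by positivity) hCpos

private theorem stmt16.decayR (n : ℕ) (A : Matrix (Fin n) (Fin n) ℝ)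
    (hstable : ∀ μ : ℂ, μ ∈ spectrum ℂ (A.map (Complex.ofReal : ℝ → ℂ)) →
      ‖μ‖ < 1) :
    ∃ C r : ℝ, 0 ≤ C ∧ 0 ≤ r ∧ r < 1 ∧ ∀ k i j, |(A ^ k) i j| ≤ C * r ^ k := by
  obtain ⟨C, r, hC, hr0, hr1, h⟩ := stmt16.decayC n (A.map Complex.ofReal) hstable
  refine ⟨C, r, hC, hr0, hr1, fun k i j => ?_⟩
  have hmap : (A.map (Complex.ofReal : ℝ → ℂ)) ^ k = (A ^ k).map Complex.ofReal :=
    (map_pow (Complex.ofRealHom.mapMatrix) A k).symm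
  have hentry : ‖((A ^ k).map (Complex.ofReal : ℝ → ℂ)) i j‖₊
      ≤ ‖(A.map (Complex.ofReal : ℝ → ℂ)) ^ k‖₊ := by
    rw [hmap, Matrix.linfty_opNNNorm_def]
    calc ‖((A ^ k).map (Complex.ofReal : ℝ → ℂ)) i j‖₊
        ≤ ∑ j', ‖((A ^ k).map (Complex.ofReal : ℝ → ℂ)) i j'‖₊ :=
          Finset.single_le_sum (f := fun j' => ‖((A ^ k).map (Complex.ofReal : ℝ → ℂ)) i j'‖₊)
            (fun _ _ => zero_le) (Finset.mem_univ j)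
      _ ≤ _ := Finset.le_sup
          (f := fun i => ∑ j', ‖((A ^ k).map (Complex.ofReal : ℝ → ℂ)) i j'‖₊)
          (Finset.mem_univ i)
  have h2 : |(A ^ k) i j| ≤ ‖(A.map (Complex.ofReal : ℝ → ℂ)) ^ k‖ := by
    have h3 := (NNReal.coe_le_coe.mpr hentry : (‖_‖₊ : ℝ) ≤ _)
    simpa [Matrix.map_apply, coe_nnnorm] using h3
  exact h2.trans (h k)

end Aux

/-- Entrywise bound on `A ^ k * M * Aᵀ ^ k`. -/
private theorem stmt16.entry_bound (n : ℕ) (A M : Matrix (Fin n) (Fin n) ℝ)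
    (C r D : ℝ) (hC : 0 ≤ C) (hr : 0 ≤ r)
    (hb : ∀ k i j, |(A ^ k) i j| ≤ C * r ^ k)
    (hD : ∀ p q, |M p q| ≤ D) (k : ℕ) (i j : Fin n) :
    |(A ^ k * M * Aᵀ ^ k) i j| ≤ ((n:ℝ)^2 * C^2 * D) * (r^2) ^ k := by
  have hD0 : 0 ≤ D := (abs_nonneg _).trans (hD i j)
  have hCr : 0 ≤ C * r ^ k := by positivity
  have hexp : (A ^ k * M * Aᵀ ^ k) i j
      = ∑ q, (∑ p, (A ^ k) i p * M p q) * (A ^ k) j q := by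
    simp [Matrix.mul_apply, ← Matrix.transpose_pow, Matrix.transpose_apply]
  have hinner : ∀ q : Fin n, |(∑ p, (A ^ k) i p * M p q) * (A ^ k) j q|
      ≤ ((n:ℝ) * (C * r ^ k * D)) * (C * r ^ k) := by
    intro q
    rw [abs_mul]
    refine mul_le_mul ?_ (hb k j q) (abs_nonneg _) (by positivity)
    calc |∑ p, (A ^ k) i p * M p q| ≤ ∑ p, |(A ^ k) i p * M p q| :=
          Finset.abs_sum_le_sum_abs _ _
      _ ≤ ∑ _p : Fin n, C * r ^ k * D := by
          refine Finset.sum_le_sum fun p _ => ?_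
          rw [abs_mul]
          exact mul_le_mul (hb k i p) (hD p q) (abs_nonneg _) hCr
      _ = (n:ℝ) * (C * r ^ k * D) := by
          simp [Finset.sum_const, Finset.card_univ, mul_comm]
  calc |(A ^ k * M * Aᵀ ^ k) i j|
      = |∑ q, (∑ p, (A ^ k) i p * M p q) * (A ^ k) j q| := by rw [hexp]
    _ ≤ ∑ q, |(∑ p, (A ^ k) i p * M p q) * (A ^ k) j q| := Finset.abs_sum_le_sum_abs _ _
    _ ≤ ∑ _q : Fin n, ((n:ℝ) * (C * r ^ k * D)) * (C * r ^ k) :=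
        Finset.sum_le_sum fun q _ => hinner q
    _ = (n:ℝ) * (((n:ℝ) * (C * r ^ k * D)) * (C * r ^ k)) := by
        simp [Finset.sum_const, Finset.card_univ, mul_comm]
    _ = ((n:ℝ)^2 * C^2 * D) * (r^2) ^ k := by ring

/-- Cayley–Hamilton extension of the controllability condition. -/
private theorem stmt16.ctrl_ext (n m : ℕ) (A : Matrix (Fin n) (Fin n) ℝ)
    (B : Matrix (Fin n) (Fin m) ℝ) (x : Fin n → ℝ)
    (h : ∀ k : ℕ, k < n → Matrix.vecMul x ((A ^ k) * B) = 0) :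
    ∀ k : ℕ, Matrix.vecMul x ((A ^ k) * B) = 0 := by
  rcases Nat.eq_zero_or_pos n with hn | hn
  · subst hn
    intro k
    ext j
    simp [Matrix.vecMul, dotProduct]
  -- A ^ n as a combination of smaller powers
  have hCH := Matrix.aeval_self_charpoly A
  have hdeg : A.charpoly.natDegree = n := by
    rw [Matrix.charpoly_natDegree_eq_dim, Fintype.card_fin]
  have hmon : A.charpoly.Monic := Matrix.charpoly_monic A
  have hAn : A ^ n = -∑ i ∈ Finset.range n, A.charpoly.coeff i • A ^ i := by
    have := Polynomial.aeval_eq_sum_range (R := ℝ) (S := Matrix (Fin n) (Fin n) ℝ)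
      (p := A.charpoly) A
    rw [hCH, hdeg, Finset.sum_range_succ] at this
    have hlead : A.charpoly.coeff n = 1 := by
      have := hmon.coeff_natDegree
      rwa [hdeg] at this
    rw [hlead, one_smul] at this
    exact eq_neg_of_add_eq_zero_right this.symm
  intro k
  induction k using Nat.strong_induction_on with
  | _ k ih =>
    rcases lt_or_ge k n with hk | hk
    · exact h k hk
    · have hkn : k - n + n = k := Nat.sub_add_cancel hk
      have hAk : A ^ k = -∑ i ∈ Finset.range n, A.charpoly.coeff i • A ^ (k - n + i) := by
        calc A ^ k = A ^ (k - n) * A ^ n := by rw [← pow_add, hkn]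
          _ = A ^ (k - n) * (-∑ i ∈ Finset.range n, A.charpoly.coeff i • A ^ i) := by
              rw [hAn]
          _ = -∑ i ∈ Finset.range n, A.charpoly.coeff i • A ^ (k - n + i) := by
              rw [mul_neg, Finset.mul_sum]
              congr 1
              refine Finset.sum_congr rfl fun i _ => ?_
              rw [mul_smul_comm, ← pow_add]
      have hvsum : ∀ (s : Finset ℕ) (f : ℕ → Matrix (Fin n) (Fin m) ℝ),
          Matrix.vecMul x (∑ i ∈ s, f i) = ∑ i ∈ s, Matrix.vecMul x (f i) :=
        fun s f => map_sum (AddMonoidHom.mk' (fun N => Matrix.vecMul x N)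
          (fun X Y => Matrix.vecMul_add X Y x)) f s
      rw [hAk, Matrix.neg_mul, Matrix.vecMul_neg, Matrix.sum_mul, hvsum]
      have hz : ∀ i ∈ Finset.range n,
          Matrix.vecMul x ((A.charpoly.coeff i • A ^ (k - n + i)) * B) = 0 := by
        intro i hi
        have hsmul : ∀ (c : ℝ) (Y : Matrix (Fin n) (Fin m) ℝ),
            Matrix.vecMul x (c • Y) = c • Matrix.vecMul x Y := by
          intro c Y
          ext j
          simp [Matrix.vecMul, dotProduct, Finset.mul_sum, mul_left_comm]
        rw [Matrix.smul_mul, hsmul]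
        rw [ih (k - n + i) (by have := Finset.mem_range.mp hi; omega)]
        simp
      rw [Finset.sum_congr rfl hz]
      simp

open Matrix

/-- For `A` with spectral radius `< 1`, the Lyapunov–Stein equation `W - A W Aᵀ = B Bᵀ`
has a unique solution, namely `∑ₖ Aᵏ B Bᵀ (Aᵀ)ᵏ`; it is positive semidefinite, and it is
positive definite iff `(A, B)` is controllable. -/
theorem stmt16 (n m : ℕ)
    (A : Matrix (Fin n) (Fin n) ℝ) (B : Matrix (Fin n) (Fin m) ℝ)
    (hstable : ∀ μ : ℂ, μ ∈ spectrum ℂ (A.map (Complex.ofReal : ℝ → ℂ)) →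
      ‖μ‖ < 1) :
    (∃! W : Matrix (Fin n) (Fin n) ℝ, W - A * W * Aᵀ = B * Bᵀ) ∧
    ((∑' k : ℕ, A ^ k * (B * Bᵀ) * (Aᵀ) ^ k)
      - A * (∑' k : ℕ, A ^ k * (B * Bᵀ) * (Aᵀ) ^ k) * Aᵀ = B * Bᵀ) ∧
    (∑' k : ℕ, A ^ k * (B * Bᵀ) * (Aᵀ) ^ k).PosSemidef ∧
    ((∑' k : ℕ, A ^ k * (B * Bᵀ) * (Aᵀ) ^ k).PosDef ↔
      ∀ x : Fin n → ℝ,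
        (∀ k : ℕ, k < n → Matrix.vecMul x ((A ^ k) * B) = 0) → x = 0) := by
  obtain ⟨C, r, hC, hr0, hr1, hb⟩ := stmt16.decayR n A hstable
  set M : Matrix (Fin n) (Fin n) ℝ := B * Bᵀ with hM
  set g : ℕ → Matrix (Fin n) (Fin n) ℝ := fun k => A ^ k * M * Aᵀ ^ k with hg
  set D : ℝ := ∑ p, ∑ q, |M p q| with hD
  have hDb : ∀ p q, |M p q| ≤ D := by
    intro p q
    rw [hD]
    calc |M p q| ≤ ∑ q', |M p q'| :=
        Finset.single_le_sum (f := fun q' => |M p q'|) (fun _ _ => abs_nonneg _)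
          (Finset.mem_univ q)
      _ ≤ ∑ p', ∑ q', |M p' q'| :=
        Finset.single_le_sum (f := fun p' => ∑ q', |M p' q'|)
          (fun _ _ => Finset.sum_nonneg fun _ _ => abs_nonneg _) (Finset.mem_univ p)
  have hgb : ∀ k i j, |g k i j| ≤ ((n:ℝ)^2 * C^2 * D) * (r^2) ^ k :=
    fun k i j => stmt16.entry_bound n A M C r D hC hr0 hb hDb k i j
  have hr2 : r ^ 2 < 1 := by nlinarith
  have hgeo : Summable fun k : ℕ => ((n:ℝ)^2 * C^2 * D) * (r^2) ^ k :=
    (summable_geometric_of_lt_one (by positivity) hr2).mul_left _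
  have hgsum : Summable g := by
    refine Pi.summable.2 fun i => Pi.summable.2 fun j => ?_
    refine Summable.of_norm_bounded hgeo fun k => ?_
    simpa [Real.norm_eq_abs] using hgb k i j
  set W : Matrix (Fin n) (Fin n) ℝ := ∑' k, g k with hW
  have hWsum : HasSum g W := hgsum.hasSum
  -- the Stein equation
  have hcont : Continuous fun X : Matrix (Fin n) (Fin n) ℝ => A * X * Aᵀ :=
    (continuous_const.mul continuous_id).mul continuous_const
  have hmap : HasSum (fun k => A * g k * Aᵀ) (A * W * Aᵀ) := by
    have := hWsum.map
      (((AddMonoidHom.mulRight Aᵀ).comp (AddMonoidHom.mulLeft A)) :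
        Matrix (Fin n) (Fin n) ℝ →+ Matrix (Fin n) (Fin n) ℝ) hcont
    simpa [Function.comp_def] using this
  have hstep : ∀ (X : Matrix (Fin n) (Fin n) ℝ) (k : ℕ),
      A * (A ^ k * X * Aᵀ ^ k) * Aᵀ = A ^ (k+1) * X * Aᵀ ^ (k+1) := by
    intro X k
    rw [pow_succ' A k, pow_succ Aᵀ k]
    simp only [Matrix.mul_assoc]
  have hshift : ∀ k, A * g k * Aᵀ = g (k + 1) := by
    intro k
    simp only [hg]
    exact hstep M k
  have hmap2 : HasSum (fun k => g (k + 1)) (A * W * Aᵀ) := by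
    simpa [hshift] using hmap
  have hmap3 : HasSum (fun k => g (k + 1)) (W - g 0) := by
    have := (hasSum_nat_add_iff' (f := g) 1).2 hWsum
    simpa using this
  have hg0 : g 0 = B * Bᵀ := by simp [hg, hM]
  have hWeq : W - A * W * Aᵀ = B * Bᵀ := by
    have := hmap2.unique hmap3
    rw [this]
    rw [← hg0]
    abel
  -- uniqueness
  have huniq : ∀ W' : Matrix (Fin n) (Fin n) ℝ, W' - A * W' * Aᵀ = B * Bᵀ → W' = W := by
    intro W' hW'
    set E : Matrix (Fin n) (Fin n) ℝ := W' - W with hE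
    have hE1 : E = A * E * Aᵀ := by
      have h1 : W' - A * W' * Aᵀ = W - A * W * Aᵀ := by rw [hW', hWeq]
      have h2 : W' - W = A * W' * Aᵀ - A * W * Aᵀ := sub_eq_sub_iff_sub_eq_sub.mp h1
      rw [hE, Matrix.mul_sub, Matrix.sub_mul]
      exact h2
    have hEk : ∀ k : ℕ, E = A ^ k * E * Aᵀ ^ k := by
      intro k
      induction k with
      | zero => simp
      | succ k ih =>
        calc E = A * E * Aᵀ := hE1
          _ = A * (A ^ k * E * Aᵀ ^ k) * Aᵀ := by rw [← ih]
          _ = A ^ (k+1) * E * Aᵀ ^ (k+1) := hstep E k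
    set DE : ℝ := ∑ p, ∑ q, |E p q| with hDE
    have hDEb : ∀ p q, |E p q| ≤ DE := by
      intro p q
      rw [hDE]
      calc |E p q| ≤ ∑ q', |E p q'| :=
          Finset.single_le_sum (f := fun q' => |E p q'|) (fun _ _ => abs_nonneg _)
            (Finset.mem_univ q)
        _ ≤ ∑ p', ∑ q', |E p' q'| :=
          Finset.single_le_sum (f := fun p' => ∑ q', |E p' q'|)
            (fun _ _ => Finset.sum_nonneg fun _ _ => abs_nonneg _) (Finset.mem_univ p)
    have hzero : ∀ i j, E i j = 0 := by
      intro i j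
      have hbnd : ∀ k : ℕ, |E i j| ≤ ((n:ℝ)^2 * C^2 * DE) * (r^2) ^ k := by
        intro k
        rw [hEk k]
        exact stmt16.entry_bound n A E C r DE hC hr0 hb hDEb k i j
      have htend : Tendsto (fun k : ℕ => ((n:ℝ)^2 * C^2 * DE) * (r^2) ^ k) atTop (nhds 0) := by
        have := tendsto_pow_atTop_nhds_zero_of_lt_one (by positivity : (0:ℝ) ≤ r^2) hr2
        simpa using this.const_mul ((n:ℝ)^2 * C^2 * DE)
      have : |E i j| ≤ 0 := ge_of_tendsto htend (Eventually.of_forall hbnd)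
      exact abs_eq_zero.mp (le_antisymm this (abs_nonneg _))
    have : E = 0 := by ext i j; exact hzero i j
    rw [hE] at this
    exact sub_eq_zero.mp this
  -- quadratic form
  have hqf : ∀ x : Fin n → ℝ, HasSum (fun k => x ⬝ᵥ (g k *ᵥ x)) (x ⬝ᵥ (W *ᵥ x)) := by
    intro x
    have hadd : ∀ X Y : Matrix (Fin n) (Fin n) ℝ,
        x ⬝ᵥ ((X + Y) *ᵥ x) = x ⬝ᵥ (X *ᵥ x) + x ⬝ᵥ (Y *ᵥ x) := by
      intro X Y
      rw [Matrix.add_mulVec, dotProduct_add]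
    have hcq : Continuous fun X : Matrix (Fin n) (Fin n) ℝ => x ⬝ᵥ (X *ᵥ x) := by
      have h1 : Continuous fun X : Matrix (Fin n) (Fin n) ℝ =>
          ∑ i, x i * ∑ j, X i j * x j := by
        refine continuous_finset_sum _ fun i _ => ?_
        refine continuous_const.mul ?_
        refine continuous_finset_sum _ fun j _ => ?_
        exact (continuous_id.matrix_elem i j).mul continuous_const
      have h2 : (fun X : Matrix (Fin n) (Fin n) ℝ => x ⬝ᵥ (X *ᵥ x))
          = fun X => ∑ i, x i * ∑ j, X i j * x j := by
        funext X
        simp [dotProduct, Matrix.mulVec]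
      rw [h2]
      exact h1
    exact hWsum.map (AddMonoidHom.mk' (fun X => x ⬝ᵥ (X *ᵥ x)) hadd) hcq
  have hterm : ∀ (x : Fin n → ℝ) k,
      x ⬝ᵥ (g k *ᵥ x) = (Matrix.vecMul x (A ^ k * B)) ⬝ᵥ (Matrix.vecMul x (A ^ k * B)) := by
    intro x k
    have hfac : g k = (A ^ k * B) * (A ^ k * B)ᵀ := by
      simp only [hg, hM, Matrix.transpose_mul, Matrix.transpose_pow, Matrix.mul_assoc]
    rw [hfac, ← Matrix.mulVec_mulVec, Matrix.dotProduct_mulVec, Matrix.mulVec_transpose]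
  have htnn : ∀ (x : Fin n → ℝ) k, 0 ≤ x ⬝ᵥ (g k *ᵥ x) := by
    intro x k
    rw [hterm x k]
    exact Finset.sum_nonneg fun i _ => mul_self_nonneg _
  have hgsymm : ∀ k, (g k)ᵀ = g k := by
    intro k
    simp [hg, hM, Matrix.transpose_mul, Matrix.transpose_pow, Matrix.transpose_transpose,
      Matrix.mul_assoc]
  have herm : W.IsHermitian := by
    rw [Matrix.IsHermitian, Matrix.conjTranspose_eq_transpose_of_trivial, hW,
      Matrix.transpose_tsum]
    simp only [hgsymm]
  have hpsd : W.PosSemidef := by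
    refine posSemidef_iff_dotProduct_mulVec.mpr ⟨herm, fun x => ?_⟩
    rw [star_trivial]
    rw [← (hqf x).tsum_eq]
    exact tsum_nonneg fun k => htnn x k
  refine ⟨⟨W, hWeq, huniq⟩, hWeq, hpsd, ?_⟩
  constructor
  · intro hPD x hx
    by_contra hx0
    have hall := stmt16.ctrl_ext n m A B x hx
    have hzero : ∀ k, x ⬝ᵥ (g k *ᵥ x) = 0 := by
      intro k
      rw [hterm x k, hall k]
      simp
    have h0 : x ⬝ᵥ (W *ᵥ x) = 0 := by
      rw [← (hqf x).tsum_eq]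
      simp [hzero]
    have hpos := hPD.dotProduct_mulVec_pos hx0
    rw [star_trivial, h0] at hpos
    exact lt_irrefl 0 hpos
  · intro hctrl
    refine PosDef.of_dotProduct_mulVec_pos herm fun x hx => ?_
    rw [star_trivial]
    have hsummq : Summable fun k => x ⬝ᵥ (g k *ᵥ x) := (hqf x).summable
    have hne : x ⬝ᵥ (W *ᵥ x) ≠ 0 := by
      intro h0
      have hts : ∑' k, x ⬝ᵥ (g k *ᵥ x) = 0 := by rw [(hqf x).tsum_eq]; exact h0
      have hqk : ∀ k, x ⬝ᵥ (g k *ᵥ x) = 0 := by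
        intro k
        refine le_antisymm ?_ (htnn x k)
        rw [← hts]
        exact Summable.le_tsum hsummq k fun j _ => htnn x j
      have hv : ∀ k, k < n → Matrix.vecMul x ((A ^ k) * B) = 0 := by
        intro k _
        have := hqk k
        rw [hterm x k] at this
        exact dotProduct_self_eq_zero.mp this
      exact hx (hctrl x hv)
    have hge : 0 ≤ x ⬝ᵥ (W *ᵥ x) := by
      rw [← (hqf x).tsum_eq]
      exact tsum_nonneg fun k => htnn x k
    exact lt_of_le_of_ne hge (Ne.symm hne)
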